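/- Consider a likelihood ratio test between a 'pure' model where a measurement equals μ + ε and a 'mixed' model where with probability α the measurement equals U + ε (U uniform on [a, μ]) and with probability 1−α equals μ + ε, where ε ~ N(0, σ²). For n i.i.d. measurements, as σ → 0 with n fixed, the probability that the likelihood ratio test incorrectly selects the pure model when data come from the mixed model tends to (1−α)ⁿ·(something ≤ 1); in particular it is at most the probability that all n mixed-model measurements are drawn from the point-mass component, which equals (1−α)ⁿ, plus a term vanishing as σ → 0. -/

import Mathlib

open MeasureTheory Real Filter Set

namespace Stmt19

noncomputable def gpdf (sigma x : ℝ) : ℝ :=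
  (1 / (sigma * Real.sqrt (2 * π))) * Real.exp (-x ^ 2 / (2 * sigma ^ 2))

variable {sigma : ℝ}

lemma sqrt2pi_pos : 0 < Real.sqrt (2 * π) :=
  Real.sqrt_pos.2 (by positivity)

lemma gpdf_pos (hs : 0 < sigma) (x : ℝ) : 0 < gpdf sigma x := by
  unfold gpdf
  have := sqrt2pi_pos
  positivity

lemma gpdf_cont (hs : 0 < sigma) : Continuous (gpdf sigma) := by
  unfold gpdf
  fun_prop

lemma gpdf_anti (hs : 0 < sigma) {d x : ℝ} (h : d ^ 2 ≤ x ^ 2) :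
    gpdf sigma x ≤ gpdf sigma d := by
  unfold gpdf
  have h1 : (0:ℝ) < 1 / (sigma * Real.sqrt (2 * π)) := by
    have := sqrt2pi_pos; positivity
  refine mul_le_mul_of_nonneg_left ?_ h1.le
  apply Real.exp_le_exp.2
  have h2 : (0:ℝ) < 2 * sigma ^ 2 := by positivity
  rw [div_le_div_iff_of_pos_right h2]
  linarith

lemma gpdf_eq (hs : 0 < sigma) (x : ℝ) :
    gpdf sigma x = (1 / (sigma * Real.sqrt (2 * π))) * Real.exp (-(2 * sigma ^ 2)⁻¹ * x ^ 2) := by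
  unfold gpdf
  rw [neg_div, div_eq_inv_mul, neg_mul]
  ring

lemma gpdf_integrable (hs : 0 < sigma) : Integrable (gpdf sigma) := by
  have h : Integrable (fun x : ℝ => Real.exp (-(2 * sigma ^ 2)⁻¹ * x ^ 2)) :=
    integrable_exp_neg_mul_sq (by positivity)
  have := h.const_mul (1 / (sigma * Real.sqrt (2 * π)))
  refine this.congr (Eventually.of_forall fun x => ?_)
  rw [gpdf_eq hs]

lemma gpdf_integral (hs : 0 < sigma) : ∫ x, gpdf sigma x = 1 := by
  have h : ∫ x : ℝ, Real.exp (-(2 * sigma ^ 2)⁻¹ * x ^ 2) = Real.sqrt (π / (2 * sigma ^ 2)⁻¹) :=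
    integral_gaussian _
  have h2 : ∫ x, gpdf sigma x
      = (1 / (sigma * Real.sqrt (2 * π))) * Real.sqrt (π / (2 * sigma ^ 2)⁻¹) := by
    rw [← h, ← integral_const_mul]
    congr 1 with x
    rw [gpdf_eq hs]
  rw [h2]
  rw [show π / (2 * sigma ^ 2)⁻¹ = (2 * π) * sigma ^ 2 by field_simp]
  have h3 : Real.sqrt (2 * π * sigma ^ 2) = Real.sqrt (2 * π) * sigma := by
    rw [Real.sqrt_mul (by positivity) (sigma ^ 2), Real.sqrt_sq hs.le]
  rw [h3]
  have h4 := sqrt2pi_pos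
  field_simp


lemma gpdf_lintegral (hs : 0 < sigma) : ∫⁻ x, ENNReal.ofReal (gpdf sigma x) = 1 := by
  rw [← ofReal_integral_eq_lintegral_ofReal (gpdf_integrable hs)
      (Eventually.of_forall fun x => (gpdf_pos hs x).le), gpdf_integral hs, ENNReal.ofReal_one]

lemma gpdf_scale (hs : 0 < sigma) (x : ℝ) : gpdf sigma x = sigma⁻¹ * gpdf 1 (x / sigma) := by
  unfold gpdf
  have h5 : sigma ≠ 0 := hs.ne'
  have harg : -(x / sigma) ^ 2 / (2 * 1 ^ 2) = -x ^ 2 / (2 * sigma ^ 2) := by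
    field_simp
  rw [harg, one_mul, one_div, one_div, mul_inv]
  ring

lemma gpdf_interval (hs : 0 < sigma) (d : ℝ) :
    ∫ x in (-d)..d, gpdf sigma x = ∫ t in (-(d / sigma))..(d / sigma), gpdf 1 t := by
  have h1 : ∀ x, gpdf sigma x = sigma⁻¹ * gpdf 1 (x / sigma) := gpdf_scale hs
  simp_rw [h1]
  rw [intervalIntegral.integral_const_mul, intervalIntegral.integral_comp_div _ hs.ne']
  rw [neg_div, smul_eq_mul]
  rw [← mul_assoc, inv_mul_cancel₀ hs.ne', one_mul]

lemma tendsto_J {d : ℝ} (hd : 0 < d) :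
    Tendsto (fun sigma => ∫ x in (-d)..d, gpdf sigma x) (nhdsWithin 0 (Set.Ioi 0)) (nhds 1) := by
  have hint : Integrable (gpdf 1) := gpdf_integrable one_pos
  have htop : Tendsto (fun sigma : ℝ => d / sigma) (nhdsWithin 0 (Set.Ioi 0)) atTop := by
    simpa [div_eq_mul_inv] using (tendsto_inv_nhdsGT_zero (𝕜 := ℝ)).const_mul_atTop hd
  have hbot : Tendsto (fun sigma : ℝ => -(d / sigma)) (nhdsWithin 0 (Set.Ioi 0)) atBot :=
    tendsto_neg_atBot_iff.2 htop
  have h := intervalIntegral_tendsto_integral hint hbot htop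
  rw [gpdf_integral one_pos] at h
  refine h.congr' ?_
  filter_upwards [self_mem_nhdsWithin] with s hs
  exact (gpdf_interval hs d).symm

lemma tendsto_gpdf_at {d : ℝ} (hd : 0 < d) :
    Tendsto (fun sigma => gpdf sigma d) (nhdsWithin 0 (Set.Ioi 0)) (nhds 0) := by
  have key : Tendsto (fun t : ℝ => t * Real.exp (-(d ^ 2 / 2) * t ^ 2)) atTop (nhds 0) := by
    have c0 : 0 < d ^ 2 / 2 := by positivity
    have h1 : Tendsto (fun t : ℝ => (fun x : ℝ => (d ^ 2 / 2)⁻¹ * (x ^ 1 * Real.exp (-x)))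
        ((d ^ 2 / 2) * t)) atTop (nhds 0) := by
      have hup : Tendsto (fun x : ℝ => (d ^ 2 / 2)⁻¹ * (x ^ 1 * Real.exp (-x))) atTop (nhds 0) := by
        have hh := (tendsto_pow_mul_exp_neg_atTop_nhds_zero 1).const_mul ((d ^ 2 / 2)⁻¹)
        rwa [mul_zero] at hh
      have hdn : Tendsto (fun t : ℝ => d ^ 2 / 2 * t) atTop atTop :=
        Tendsto.const_mul_atTop c0 tendsto_id
      exact hup.comp hdn
    apply squeeze_zero' ?_ ?_ h1
    · filter_upwards [eventually_ge_atTop 0] with t ht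
      positivity
    · filter_upwards [eventually_ge_atTop 1] with t ht
      have h2 : Real.exp (-(d ^ 2 / 2) * t ^ 2) ≤ Real.exp (-(d ^ 2 / 2 * t)) := by
        apply Real.exp_le_exp.2
        have ht2 : t ≤ t ^ 2 := by nlinarith
        nlinarith [mul_le_mul_of_nonneg_left ht2 c0.le]
      calc t * Real.exp (-(d ^ 2 / 2) * t ^ 2) ≤ t * Real.exp (-(d ^ 2 / 2 * t)) := by
            apply mul_le_mul_of_nonneg_left h2 (by linarith)
        _ = (d ^ 2 / 2)⁻¹ * ((d ^ 2 / 2 * t) ^ 1 * Real.exp (-(d ^ 2 / 2 * t))) := by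
            field_simp
  have comp := key.comp (tendsto_inv_nhdsGT_zero (𝕜 := ℝ))
  have h3 : Tendsto (fun sigma : ℝ => (Real.sqrt (2 * π))⁻¹ *
      (sigma⁻¹ * Real.exp (-(d ^ 2 / 2) * (sigma⁻¹) ^ 2))) (nhdsWithin 0 (Set.Ioi 0)) (nhds 0) := by
    simpa using comp.const_mul (Real.sqrt (2 * π))⁻¹
  refine h3.congr' ?_
  filter_upwards [self_mem_nhdsWithin] with s hs
  unfold gpdf
  rw [show -(d ^ 2 / 2) * (s⁻¹) ^ 2 = -d ^ 2 / (2 * s ^ 2) by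
    field_simp]
  rw [one_div, mul_inv]
  ring


noncomputable def II (a mu sigma y : ℝ) : ℝ := ∫ u in a..mu, (1 / (mu - a)) * gpdf sigma (y - u)

variable {a mu : ℝ}

lemma II_nonneg (ha : a < mu) (hs : 0 < sigma) (y : ℝ) : 0 ≤ II a mu sigma y := by
  unfold II
  apply intervalIntegral.integral_nonneg ha.le
  intro u _
  have hma : (0:ℝ) < mu - a := sub_pos.2 ha
  have h1 : (0:ℝ) < 1 / (mu - a) := by positivity
  exact mul_nonneg h1.le (gpdf_pos hs _).le

lemma II_eq (hs : 0 < sigma) (y : ℝ) :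
    II a mu sigma y = (1 / (mu - a)) * ∫ v in (y - mu)..(y - a), gpdf sigma v := by
  unfold II
  rw [intervalIntegral.integral_const_mul]
  congr 1
  exact intervalIntegral.integral_comp_sub_left (gpdf sigma) y

lemma II_cont (hs : 0 < sigma) : Continuous (II a mu sigma) := by
  have hint : ∀ p q : ℝ, IntervalIntegrable (gpdf sigma) volume p q :=
    fun p q => ((gpdf_cont hs).intervalIntegrable p q)
  have hF : Continuous (fun t => ∫ v in (0:ℝ)..t, gpdf sigma v) :=
    intervalIntegral.continuous_primitive hint 0
  have hsplit : II a mu sigma = fun y => (1 / (mu - a)) *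
      ((∫ v in (0:ℝ)..(y - a), gpdf sigma v) - ∫ v in (0:ℝ)..(y - mu), gpdf sigma v) := by
    funext y
    rw [II_eq hs]
    congr 1
    have h2 := intervalIntegral.integral_add_adjacent_intervals
      (hint 0 (y - mu)) (hint (y - mu) (y - a))
    linarith
  rw [hsplit]
  exact continuous_const.mul ((hF.comp (by fun_prop)).sub (hF.comp (by fun_prop)))

lemma II_lb (ha : a < mu) (hs : 0 < sigma) {d y : ℝ} (hd0 : 0 ≤ d)
    (hy : y ∈ Icc (a + d) (mu - d)) :
    (1 / (mu - a)) * ∫ v in (-d)..d, gpdf sigma v ≤ II a mu sigma y := by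
  rw [II_eq hs]
  have hma : (0:ℝ) < mu - a := sub_pos.2 ha
  have hd : -d ≤ d := by linarith
  apply mul_le_mul_of_nonneg_left ?_ (by positivity)
  apply intervalIntegral.integral_mono_interval (by linarith [hy.2] : y - mu ≤ -d) hd
    (by linarith [hy.1] : d ≤ y - a)
    (Eventually.of_forall fun v => (gpdf_pos hs v).le)
    ((gpdf_cont hs).intervalIntegrable _ _)

lemma II_lintegral (ha : a < mu) (hs : 0 < sigma) :
    ∫⁻ y, ENNReal.ofReal (II a mu sigma y) = 1 := by
  have hma : (0:ℝ) < mu - a := sub_pos.2 ha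
  have hc : (0:ℝ) < 1 / (mu - a) := by positivity
  have key : ∀ y, ENNReal.ofReal (II a mu sigma y)
      = ∫⁻ u in Ioc a mu, ENNReal.ofReal ((1 / (mu - a)) * gpdf sigma (y - u)) := by
    intro y
    unfold II
    rw [intervalIntegral.integral_of_le ha.le]
    rw [ofReal_integral_eq_lintegral_ofReal]
    · exact (Continuous.integrableOn_Icc (continuous_const.mul
        ((gpdf_cont hs).comp (continuous_const.sub continuous_id)))).mono_set
        Ioc_subset_Icc_self
    · exact Eventually.of_forall fun u => mul_nonneg hc.le (gpdf_pos hs _).le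
  simp_rw [key]
  rw [lintegral_lintegral_swap]
  · have inner : ∀ u : ℝ, (∫⁻ y, ENNReal.ofReal ((1 / (mu - a)) * gpdf sigma (y - u)))
        = ENNReal.ofReal (1 / (mu - a)) := by
      intro u
      simp_rw [ENNReal.ofReal_mul hc.le]
      have hm : Measurable fun y : ℝ => ENNReal.ofReal (gpdf sigma (y - u)) :=
        Measurable.ennreal_ofReal ((gpdf_cont hs).comp
          (continuous_id.sub continuous_const)).measurable
      rw [lintegral_const_mul _ hm]
      rw [show (∫⁻ y, ENNReal.ofReal (gpdf sigma (y - u)))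
          = ∫⁻ y, ENNReal.ofReal (gpdf sigma y) from
        lintegral_sub_right_eq_self (fun y => ENNReal.ofReal (gpdf sigma y)) u]
      rw [gpdf_lintegral hs, mul_one]
    simp_rw [inner]
    rw [setLIntegral_const, Real.volume_Ioc]
    rw [← ENNReal.ofReal_mul hc.le]
    rw [show (1 / (mu - a)) * (mu - a) = 1 by field_simp]
    exact ENNReal.ofReal_one
  · exact ((continuous_const.mul ((gpdf_cont hs).comp
      (continuous_fst.sub continuous_snd))).measurable.ennreal_ofReal).aemeasurable


lemma nu_bound (n : ℕ) (hn : 0 < n) {alpha : ℝ} (ha : a < mu) (h0 : 0 < alpha)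
    (h1 : alpha < 1) {d : ℝ} (hd : 0 < d) (hd2 : d < (mu - a) / 4) (hs : 0 < sigma) :
    (volume.withDensity fun y => ENNReal.ofReal
        (alpha * II a mu sigma y + (1 - alpha) * gpdf sigma (y - mu)))
      {y | (alpha * II a mu sigma y + (1 - alpha) * gpdf sigma (y - mu)) * (1 - alpha) ^ (n - 1)
          < gpdf sigma (y - mu)}
      ≤ ENNReal.ofReal ((1 - alpha) + alpha *
        ((1 - (1 - alpha) ^ n) / (alpha * (1 - alpha) ^ (n - 1)) * gpdf sigma d * (mu - a)
          + (1 - (∫ v in (-d)..d, gpdf sigma v) * (mu - a - 2 * d) / (mu - a)))) := by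
  have hma : (0:ℝ) < mu - a := sub_pos.2 ha
  have h1a : (0:ℝ) < 1 - alpha := by linarith
  have hb : (0:ℝ) < (1 - alpha) ^ (n - 1) := pow_pos h1a _
  have hbn : (1 - alpha) * (1 - alpha) ^ (n - 1) = (1 - alpha) ^ n := by
    conv_rhs => rw [← Nat.succ_pred_eq_of_pos hn]
    rw [pow_succ']
    rfl
  have hpn : (1 - alpha) ^ n < 1 := pow_lt_one₀ (by linarith) (by linarith) hn.ne'
  have hpn0 : (0:ℝ) < (1 - alpha) ^ n := pow_pos h1a _
  set c : ℝ := (1 - (1 - alpha) ^ n) / (alpha * (1 - alpha) ^ (n - 1)) with hcdef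
  have hcpos : 0 < c := div_pos (by linarith) (by positivity)
  set J : ℝ := ∫ v in (-d)..d, gpdf sigma v with hJdef
  have hJ0 : 0 ≤ J := intervalIntegral.integral_nonneg (by linarith)
    (fun v _ => (gpdf_pos hs v).le)
  have hJ1 : J ≤ 1 := by
    rw [hJdef, intervalIntegral.integral_of_le (by linarith : -d ≤ d)]
    calc ∫ v in Ioc (-d) d, gpdf sigma v ≤ ∫ v, gpdf sigma v :=
          setIntegral_le_integral (gpdf_integrable hs)
            (Eventually.of_forall fun x => (gpdf_pos hs x).le)
      _ = 1 := gpdf_integral hs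
  set fm : ℝ → ℝ := fun y => alpha * II a mu sigma y + (1 - alpha) * gpdf sigma (y - mu)
    with hfmdef
  have hgc : Continuous fun y : ℝ => gpdf sigma (y - mu) :=
    (gpdf_cont hs).comp (continuous_id.sub continuous_const)
  have hfm_cont : Continuous fm :=
    (continuous_const.mul (II_cont hs)).add (continuous_const.mul hgc)
  set A : Set ℝ := {y | fm y * (1 - alpha) ^ (n - 1) < gpdf sigma (y - mu)} with hAdef
  have hAmeas : MeasurableSet A :=
    measurableSet_lt (hfm_cont.mul continuous_const).measurable hgc.measurable
  set B : Set ℝ := Icc (a + d) (mu - d) with hBdef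
  have hBmeas : MeasurableSet B := measurableSet_Icc
  have hIA : ∀ y ∈ A, II a mu sigma y < c * gpdf sigma (y - mu) := by
    intro y hy
    simp only [hAdef, mem_setOf_eq, hfmdef] at hy
    rw [hcdef, div_mul_eq_mul_div, lt_div_iff₀ (by positivity)]
    nlinarith [II_nonneg ha hs y, gpdf_pos hs (y - mu)]
  -- bound pieces
  set q1 : ℝ := c * gpdf sigma d * (mu - a) with hq1def
  set q2 : ℝ := 1 - J * (mu - a - 2 * d) / (mu - a) with hq2def
  have hq1nn : 0 ≤ q1 := by
    have := (gpdf_pos hs d).le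
    rw [hq1def]; positivity
  have hq2nn : 0 ≤ q2 := by
    rw [hq2def]
    have hle : J * (mu - a - 2 * d) ≤ 1 * (mu - a) := by nlinarith
    rw [sub_nonneg, div_le_one hma]
    linarith
  have hT1 : (∫⁻ y in A ∩ B, ENNReal.ofReal (II a mu sigma y)) ≤ ENNReal.ofReal q1 := by
    have hub : ∀ y ∈ A ∩ B, ENNReal.ofReal (II a mu sigma y)
        ≤ ENNReal.ofReal (c * gpdf sigma d) := by
      intro y hy
      apply ENNReal.ofReal_le_ofReal
      have h2 := hIA y hy.1
      have h3 : gpdf sigma (y - mu) ≤ gpdf sigma d := by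
        apply gpdf_anti hs
        have := hy.2.2
        nlinarith [hy.2.1, hy.2.2]
      nlinarith [gpdf_pos hs (y - mu)]
    calc (∫⁻ y in A ∩ B, ENNReal.ofReal (II a mu sigma y))
        ≤ ∫⁻ _ in A ∩ B, ENNReal.ofReal (c * gpdf sigma d) :=
          setLIntegral_mono measurable_const hub
      _ = ENNReal.ofReal (c * gpdf sigma d) * volume (A ∩ B) := setLIntegral_const _ _
      _ ≤ ENNReal.ofReal (c * gpdf sigma d) * ENNReal.ofReal (mu - a) := by
          apply mul_le_mul_right ?_
          calc volume (A ∩ B) ≤ volume B := measure_mono inter_subset_right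
            _ = ENNReal.ofReal (mu - d - (a + d)) := Real.volume_Icc
            _ ≤ ENNReal.ofReal (mu - a) := ENNReal.ofReal_le_ofReal (by linarith)
      _ = ENNReal.ofReal q1 := by
          rw [← ENNReal.ofReal_mul (mul_nonneg hcpos.le (gpdf_pos hs d).le)]
  have hT2 : (∫⁻ y in Bᶜ, ENNReal.ofReal (II a mu sigma y)) ≤ ENNReal.ofReal q2 := by
    have htot := lintegral_add_compl (fun y => ENNReal.ofReal (II a mu sigma y)) hBmeas
      (μ := volume)
    rw [II_lintegral ha hs] at htot
    set p : ℝ := J * (mu - a - 2 * d) / (mu - a) with hpdef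
    have hpnn : 0 ≤ p := by
      rw [hpdef]
      have : (0:ℝ) ≤ mu - a - 2 * d := by linarith
      positivity
    have hlow : ENNReal.ofReal p ≤ ∫⁻ y in B, ENNReal.ofReal (II a mu sigma y) := by
      have hlb : ∀ y ∈ B, ENNReal.ofReal ((1 / (mu - a)) * J)
          ≤ ENNReal.ofReal (II a mu sigma y) := fun y hy =>
        ENNReal.ofReal_le_ofReal (II_lb ha hs hd.le hy)
      calc ENNReal.ofReal p
          = ENNReal.ofReal ((1 / (mu - a)) * J) * ENNReal.ofReal (mu - d - (a + d)) := by
            rw [← ENNReal.ofReal_mul (by positivity)]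
            congr 1
            rw [hpdef]; ring
        _ = ENNReal.ofReal ((1 / (mu - a)) * J) * volume B := by rw [hBdef, Real.volume_Icc]
        _ = ∫⁻ _ in B, ENNReal.ofReal ((1 / (mu - a)) * J) := (setLIntegral_const _ _).symm
        _ ≤ ∫⁻ y in B, ENNReal.ofReal (II a mu sigma y) :=
            setLIntegral_mono ((II_cont hs).measurable.ennreal_ofReal) hlb
    have hsum : ENNReal.ofReal q2 + ENNReal.ofReal p = 1 := by
      rw [← ENNReal.ofReal_add hq2nn hpnn]
      rw [show q2 + p = 1 by rw [hq2def, hpdef]; ring, ENNReal.ofReal_one]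
    have hstep : (∫⁻ y in Bᶜ, ENNReal.ofReal (II a mu sigma y)) + ENNReal.ofReal p
        ≤ ENNReal.ofReal q2 + ENNReal.ofReal p := by
      rw [hsum]
      calc (∫⁻ y in Bᶜ, ENNReal.ofReal (II a mu sigma y)) + ENNReal.ofReal p
          ≤ (∫⁻ y in Bᶜ, ENNReal.ofReal (II a mu sigma y))
            + ∫⁻ y in B, ENNReal.ofReal (II a mu sigma y) := add_le_add_right hlow _
        _ = 1 := by rw [add_comm]; exact htot
    exact (ENNReal.add_le_add_iff_right ENNReal.ofReal_ne_top).1 hstep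
  have hT : (∫⁻ y in A, ENNReal.ofReal (II a mu sigma y))
      ≤ ENNReal.ofReal q1 + ENNReal.ofReal q2 := by
    have hsub : A ⊆ (A ∩ B) ∪ Bᶜ := by
      intro y hy
      by_cases h : y ∈ B
      · exact Or.inl ⟨hy, h⟩
      · exact Or.inr h
    calc (∫⁻ y in A, ENNReal.ofReal (II a mu sigma y))
        ≤ ∫⁻ y in (A ∩ B) ∪ Bᶜ, ENNReal.ofReal (II a mu sigma y) := lintegral_mono_set hsub
      _ ≤ (∫⁻ y in A ∩ B, ENNReal.ofReal (II a mu sigma y))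
          + ∫⁻ y in Bᶜ, ENNReal.ofReal (II a mu sigma y) := lintegral_union_le _ _ _
      _ ≤ ENNReal.ofReal q1 + ENNReal.ofReal q2 := add_le_add hT1 hT2
  -- assemble
  rw [withDensity_apply _ hAmeas]
  have hptw : ∀ y : ℝ, ENNReal.ofReal (fm y)
      = ENNReal.ofReal alpha * ENNReal.ofReal (II a mu sigma y)
        + ENNReal.ofReal (1 - alpha) * ENNReal.ofReal (gpdf sigma (y - mu)) := by
    intro y
    rw [hfmdef]
    rw [ENNReal.ofReal_add (mul_nonneg h0.le (II_nonneg ha hs y))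
      (mul_nonneg h1a.le (gpdf_pos hs _).le)]
    rw [ENNReal.ofReal_mul h0.le, ENNReal.ofReal_mul h1a.le]
  calc (∫⁻ y in A, ENNReal.ofReal (fm y))
      = (∫⁻ y in A, ENNReal.ofReal alpha * ENNReal.ofReal (II a mu sigma y)
          + ENNReal.ofReal (1 - alpha) * ENNReal.ofReal (gpdf sigma (y - mu))) := by
        simp_rw [hptw]
    _ = ENNReal.ofReal alpha * (∫⁻ y in A, ENNReal.ofReal (II a mu sigma y))
        + ENNReal.ofReal (1 - alpha) * ∫⁻ y in A, ENNReal.ofReal (gpdf sigma (y - mu)) := by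
        rw [lintegral_add_left (((II_cont hs).measurable.ennreal_ofReal).const_mul _)]
        rw [lintegral_const_mul _ ((II_cont hs).measurable.ennreal_ofReal)]
        rw [lintegral_const_mul _ (hgc.measurable.ennreal_ofReal)]
    _ ≤ ENNReal.ofReal alpha * (ENNReal.ofReal q1 + ENNReal.ofReal q2)
        + ENNReal.ofReal (1 - alpha) * 1 := by
        apply add_le_add
        · exact mul_le_mul_right hT _
        · apply mul_le_mul_right
          calc (∫⁻ y in A, ENNReal.ofReal (gpdf sigma (y - mu)))
              ≤ ∫⁻ y, ENNReal.ofReal (gpdf sigma (y - mu)) := setLIntegral_le_lintegral _ _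
            _ = ∫⁻ y, ENNReal.ofReal (gpdf sigma y) :=
                lintegral_sub_right_eq_self (fun y => ENNReal.ofReal (gpdf sigma y)) mu
            _ = 1 := gpdf_lintegral hs
    _ = ENNReal.ofReal (1 - alpha + alpha * (q1 + q2)) := by
        rw [mul_one, ← ENNReal.ofReal_add hq1nn hq2nn,
          ← ENNReal.ofReal_mul h0.le,
          ← ENNReal.ofReal_add (mul_nonneg h0.le (by linarith)) h1a.le, add_comm]

lemma prod_subset (n : ℕ) {alpha : ℝ} (ha : a < mu) (h0 : 0 < alpha) (h1 : alpha < 1)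
    (hs : 0 < sigma) :
    {x : Fin n → ℝ | ∏ i, (alpha * II a mu sigma (x i) + (1 - alpha) * gpdf sigma (x i - mu))
        < ∏ i, gpdf sigma (x i - mu)}
      ⊆ Set.pi univ (fun _ : Fin n => {y : ℝ |
          (alpha * II a mu sigma y + (1 - alpha) * gpdf sigma (y - mu)) * (1 - alpha) ^ (n - 1)
            < gpdf sigma (y - mu)}) := by
  intro x hx i _
  simp only [mem_setOf_eq] at hx ⊢
  set fm : ℝ → ℝ := fun y => alpha * II a mu sigma y + (1 - alpha) * gpdf sigma (y - mu)
    with hfmdef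
  have h1a : (0:ℝ) < 1 - alpha := by linarith
  have hfm_nn : ∀ y, 0 ≤ fm y := fun y => add_nonneg
    (mul_nonneg h0.le (II_nonneg ha hs y)) (mul_nonneg h1a.le (gpdf_pos hs _).le)
  have hfm_lb : ∀ y, (1 - alpha) * gpdf sigma (y - mu) ≤ fm y := fun y =>
    le_add_of_nonneg_left (mul_nonneg h0.le (II_nonneg ha hs y))
  have hPpos : 0 < ∏ j ∈ Finset.univ.erase i, gpdf sigma (x j - mu) :=
    Finset.prod_pos fun j _ => gpdf_pos hs _
  have hcard : (Finset.univ.erase i).card = n - 1 := by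
    rw [Finset.card_erase_of_mem (Finset.mem_univ i), Finset.card_univ, Fintype.card_fin]
  have h3 : (1 - alpha) ^ (n - 1) * ∏ j ∈ Finset.univ.erase i, gpdf sigma (x j - mu)
      ≤ ∏ j ∈ Finset.univ.erase i, fm (x j) := by
    calc (1 - alpha) ^ (n - 1) * ∏ j ∈ Finset.univ.erase i, gpdf sigma (x j - mu)
        = ∏ j ∈ Finset.univ.erase i, ((1 - alpha) * gpdf sigma (x j - mu)) := by
          rw [Finset.prod_mul_distrib, Finset.prod_const, hcard]
      _ ≤ ∏ j ∈ Finset.univ.erase i, fm (x j) :=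
          Finset.prod_le_prod (fun j _ => mul_nonneg h1a.le (gpdf_pos hs _).le)
            (fun j _ => hfm_lb (x j))
  have h4 : fm (x i) * ∏ j ∈ Finset.univ.erase i, fm (x j) = ∏ j, fm (x j) :=
    Finset.mul_prod_erase Finset.univ (fun j => fm (x j)) (Finset.mem_univ i)
  have h5 : gpdf sigma (x i - mu) * ∏ j ∈ Finset.univ.erase i, gpdf sigma (x j - mu)
      = ∏ j, gpdf sigma (x j - mu) :=
    Finset.mul_prod_erase Finset.univ (fun j => gpdf sigma (x j - mu)) (Finset.mem_univ i)
  have h6 : fm (x i) * (1 - alpha) ^ (n - 1) * ∏ j ∈ Finset.univ.erase i, gpdf sigma (x j - mu)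
      < gpdf sigma (x i - mu) * ∏ j ∈ Finset.univ.erase i, gpdf sigma (x j - mu) := by
    calc fm (x i) * (1 - alpha) ^ (n - 1) * ∏ j ∈ Finset.univ.erase i, gpdf sigma (x j - mu)
        = fm (x i) * ((1 - alpha) ^ (n - 1)
            * ∏ j ∈ Finset.univ.erase i, gpdf sigma (x j - mu)) := by ring
      _ ≤ fm (x i) * ∏ j ∈ Finset.univ.erase i, fm (x j) :=
          mul_le_mul_of_nonneg_left h3 (hfm_nn _)
      _ = ∏ j, fm (x j) := h4
      _ < ∏ j, gpdf sigma (x j - mu) := hx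
      _ = _ := h5.symm
  exact (mul_lt_mul_iff_of_pos_right hPpos).1 h6

lemma eventually_bound (n : ℕ) (hn : 0 < n) {alpha : ℝ} (ha : a < mu) (h0 : 0 < alpha)
    (h1 : alpha < 1) {eps : ℝ} (heps : 0 < eps) :
    ∀ᶠ sigma in nhdsWithin (0:ℝ) (Set.Ioi 0),
      ((Measure.pi fun _ : Fin n => volume.withDensity fun x => ENNReal.ofReal
          (alpha * II a mu sigma x + (1 - alpha) * gpdf sigma (x - mu)))
        {x : Fin n → ℝ |
          ∏ i, (alpha * II a mu sigma (x i) + (1 - alpha) * gpdf sigma (x i - mu))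
            < ∏ i, gpdf sigma (x i - mu)}).toReal < (1 - alpha) ^ n + eps := by
  have h1a : (0:ℝ) < 1 - alpha := by linarith
  have hma : (0:ℝ) < mu - a := sub_pos.2 ha
  -- choose eta > 0 with ((1-alpha)+eta)^n < (1-alpha)^n + eps
  have hcp : Continuous fun t : ℝ => ((1 - alpha) + t) ^ n := by fun_prop
  have htnd : Tendsto (fun t : ℝ => ((1 - alpha) + t) ^ n) (nhds 0)
      (nhds ((1 - alpha) ^ n)) := by
    have := hcp.tendsto 0
    simpa using this
  have hev : ∀ᶠ t in nhdsWithin (0:ℝ) (Set.Ioi 0),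
      ((1 - alpha) + t) ^ n < (1 - alpha) ^ n + eps :=
    (htnd.eventually_lt_const (by linarith)).filter_mono nhdsWithin_le_nhds
  have hev2 : ∀ᶠ t in nhdsWithin (0:ℝ) (Set.Ioi 0), t ∈ Set.Ioi (0:ℝ) :=
    self_mem_nhdsWithin
  obtain ⟨eta, heta1, heta2'⟩ := (hev.and hev2).exists
  have heta2 : 0 < eta := heta2'
  set d : ℝ := min (eta * (mu - a) / (4 * alpha)) ((mu - a) / 8) with hddef
  have hd : 0 < d := lt_min (by positivity) (by positivity)
  have hd2 : d < (mu - a) / 4 := lt_of_le_of_lt (min_le_right _ _) (by linarith)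
  have hblim : Tendsto (fun sigma => (1 - alpha) + alpha *
      ((1 - (1 - alpha) ^ n) / (alpha * (1 - alpha) ^ (n - 1)) * gpdf sigma d * (mu - a)
        + (1 - (∫ v in (-d)..d, gpdf sigma v) * (mu - a - 2 * d) / (mu - a))))
      (nhdsWithin 0 (Set.Ioi 0))
      (nhds ((1 - alpha) + alpha *
        ((1 - (1 - alpha) ^ n) / (alpha * (1 - alpha) ^ (n - 1)) * 0 * (mu - a)
          + (1 - 1 * (mu - a - 2 * d) / (mu - a))))) := by
    apply tendsto_const_nhds.add
    apply Tendsto.const_mul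
    apply Tendsto.add
    · exact ((tendsto_gpdf_at hd).const_mul _).mul_const (mu - a)
    · exact tendsto_const_nhds.sub
        (((tendsto_J hd).mul_const (mu - a - 2 * d)).div_const (mu - a))
  have hlim_lt : (1 - alpha) + alpha *
      ((1 - (1 - alpha) ^ n) / (alpha * (1 - alpha) ^ (n - 1)) * 0 * (mu - a)
        + (1 - 1 * (mu - a - 2 * d) / (mu - a))) < (1 - alpha) + eta := by
    have hq : 1 - 1 * (mu - a - 2 * d) / (mu - a) = 2 * d / (mu - a) := by
      field_simp
      ring
    rw [hq, mul_zero, zero_mul, zero_add]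
    have hdle : d ≤ eta * (mu - a) / (4 * alpha) := min_le_left _ _
    rw [le_div_iff₀ (by positivity)] at hdle
    have hkey : alpha * (2 * d / (mu - a)) ≤ eta / 2 := by
      rw [mul_div_assoc', div_le_div_iff₀ hma two_pos]
      nlinarith
    linarith
  have hevb := hblim.eventually_lt_const hlim_lt
  filter_upwards [hevb, self_mem_nhdsWithin] with sigma hbs hspos
  have hsp : (0:ℝ) < sigma := hspos
  set A : Set ℝ := {y : ℝ |
      (alpha * II a mu sigma y + (1 - alpha) * gpdf sigma (y - mu)) * (1 - alpha) ^ (n - 1)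
        < gpdf sigma (y - mu)} with hAdef
  set nu : Measure ℝ := volume.withDensity fun x => ENNReal.ofReal
      (alpha * II a mu sigma x + (1 - alpha) * gpdf sigma (x - mu)) with hnudef
  set S : Set (Fin n → ℝ) := {x : Fin n → ℝ |
      ∏ i, (alpha * II a mu sigma (x i) + (1 - alpha) * gpdf sigma (x i - mu))
        < ∏ i, gpdf sigma (x i - mu)} with hSdef
  have hM : (Measure.pi fun _ : Fin n => nu) S ≤ (nu A) ^ n := by
    calc (Measure.pi fun _ : Fin n => nu) S
        ≤ (Measure.pi fun _ : Fin n => nu) (Set.pi univ fun _ : Fin n => A) :=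
          measure_mono (prod_subset n ha h0 h1 hsp)
      _ = ∏ _i : Fin n, nu A := Measure.pi_pi _ _
      _ = (nu A) ^ n := by
          rw [Finset.prod_const, Finset.card_univ, Fintype.card_fin]
  have hnu2 : nu A ≤ ENNReal.ofReal ((1 - alpha) + eta) :=
    (nu_bound n hn ha h0 h1 hd hd2 hsp).trans (ENNReal.ofReal_le_ofReal hbs.le)
  have hfin : (Measure.pi fun _ : Fin n => nu) S
      ≤ ENNReal.ofReal (((1 - alpha) + eta) ^ n) := by
    refine hM.trans ?_
    calc (nu A) ^ n ≤ (ENNReal.ofReal ((1 - alpha) + eta)) ^ n := pow_le_pow_left' hnu2 n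
      _ = ENNReal.ofReal (((1 - alpha) + eta) ^ n) := (ENNReal.ofReal_pow (by linarith) n).symm
  have hlast := ENNReal.toReal_le_of_le_ofReal (by positivity) hfin
  linarith

end Stmt19

/-- Likelihood ratio test between a 'pure' model (measurement `= μ + ε`) and a 'mixed' model
(with probability `α` the measurement is `U + ε`, `U` uniform on `[a, μ]`; otherwise `μ + ε`),
with `ε ~ N(0, σ²)`. For `n` i.i.d. measurements, the probability (under the mixed model) that
the likelihood ratio test strictly prefers the pure model is at most `(1−α)ⁿ` — the probability
that all `n` mixed-model measurements come from the point-mass component — plus a term that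
vanishes as `σ → 0⁺`. -/
theorem stmt_19
    (n : ℕ) (hn : 0 < n) (a mu alpha : ℝ)
    (ha : a < mu) (halpha0 : 0 < alpha) (halpha1 : alpha < 1)
    (phi : ℝ → ℝ → ℝ)
    (hphi : ∀ sigma x, phi sigma x =
      (1 / (sigma * Real.sqrt (2 * π))) * Real.exp (-x ^ 2 / (2 * sigma ^ 2)))
    (fpure fmix : ℝ → ℝ → ℝ)
    (hfpure : ∀ sigma x, fpure sigma x = phi sigma (x - mu))
    (hfmix : ∀ sigma x, fmix sigma x =
      alpha * (∫ u in a..mu, (1 / (mu - a)) * phi sigma (x - u)) +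
        (1 - alpha) * phi sigma (x - mu)) :
    ∃ g : ℝ → ℝ,
      Tendsto g (nhdsWithin 0 (Set.Ioi 0)) (nhds 0) ∧
      ∀ sigma : ℝ, 0 < sigma →
        ((Measure.pi (fun _ : Fin n =>
            volume.withDensity (fun x => ENNReal.ofReal (fmix sigma x))))
          {x : Fin n → ℝ |
            ∏ i : Fin n, fmix sigma (x i) < ∏ i : Fin n, fpure sigma (x i)}).toReal
          ≤ (1 - alpha) ^ n + g sigma := by
  have hphi' : ∀ sigma, phi sigma = Stmt19.gpdf sigma := fun s => funext fun x => hphi s x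
  have hfm : ∀ sigma x, fmix sigma x =
      alpha * Stmt19.II a mu sigma x + (1 - alpha) * Stmt19.gpdf sigma (x - mu) := by
    intro s x
    rw [hfmix, hphi']
    rfl
  have hfp : ∀ sigma x, fpure sigma x = Stmt19.gpdf sigma (x - mu) := fun s x => by
    rw [hfpure, hphi']
  refine ⟨fun sigma => max 0 (((Measure.pi (fun _ : Fin n =>
      volume.withDensity (fun x => ENNReal.ofReal (fmix sigma x))))
      {x : Fin n → ℝ |
        ∏ i : Fin n, fmix sigma (x i) < ∏ i : Fin n, fpure sigma (x i)}).toReal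
      - (1 - alpha) ^ n), ?_, ?_⟩
  · rw [Metric.tendsto_nhds]
    intro eps heps
    have hev := Stmt19.eventually_bound (a := a) (mu := mu) n hn ha halpha0 halpha1 heps
    filter_upwards [hev, self_mem_nhdsWithin] with sigma hb hsp
    have hsp' : (0:ℝ) < sigma := hsp
    have hseteq : {x : Fin n → ℝ |
          ∏ i : Fin n, fmix sigma (x i) < ∏ i : Fin n, fpure sigma (x i)}
        = {x : Fin n → ℝ |
            ∏ i, (alpha * Stmt19.II a mu sigma (x i)
              + (1 - alpha) * Stmt19.gpdf sigma (x i - mu))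
              < ∏ i, Stmt19.gpdf sigma (x i - mu)} := by
      ext x
      simp only [Set.mem_setOf_eq, hfm, hfp]
    have hdens : (fun x => ENNReal.ofReal (fmix sigma x))
        = fun x => ENNReal.ofReal (alpha * Stmt19.II a mu sigma x
            + (1 - alpha) * Stmt19.gpdf sigma (x - mu)) := by
      funext x
      rw [hfm]
    rw [dist_zero_right, hseteq, hdens, Real.norm_eq_abs, abs_of_nonneg (le_max_left _ _)]
    exact max_lt heps (by linarith [hb])
  · intro sigma hsp
    have h := le_max_right (0:ℝ) ((((Measure.pi (fun _ : Fin n =>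
      volume.withDensity (fun x => ENNReal.ofReal (fmix sigma x))))
      {x : Fin n → ℝ |
        ∏ i : Fin n, fmix sigma (x i) < ∏ i : Fin n, fpure sigma (x i)}).toReal
      - (1 - alpha) ^ n))
    linarith
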